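/- (Conservativeness) Given a PEG G, a parsing expression p and a subject xy: if G[p] xy ⇝ X in the original PEG semantics, where X is either fail or a pair (y, x'), then G[p] xy L ⇝ X in the left-recursive extended semantics, for any memoization table L such that (A, w) ∉ L for every non-terminal A and subject w such that G[A] w appears on the left-hand side of a node of the proof tree of G[p] xy ⇝ X. -/
import Mathlib


/-- Parsing expressions over non-terminals `N` and terminals `T`. -/
inductive PExp (N T : Type) : Type where
  | empty : PExp N T
  | term : T → PExp N T
  | var : N → PExp N T
  | seq : PExp N T → PExp N T → PExp N T
  | choice : PExp N T → PExp N T → PExp N T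
  | star : PExp N T → PExp N T
  | nott : PExp N T → PExp N T

/-- A PEG: a rule for every non-terminal and a starting expression.
(A PEG whose `prod` is a total function is a closed PEG.) -/
structure PEG (N T : Type) where
  prod : N → PExp N T
  start : PExp N T

/-- Symbols of parse strings: terminals and tagged brackets `A[...]`. -/
inductive PSym (N T : Type) : Type where
  | t : T → PSym N T
  | node : N → List (PSym N T) → PSym N T

/-- Parse strings. -/
abbrev PStr (N T : Type) := List (PSym N T)

/-- Result of a match: `fail`, or a pair (remaining suffix, parse string). -/
inductive Res (N T : Type) : Type where
  | fail : Res N T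
  | ok : List T → PStr N T → Res N T
/-- Memoization tables: partial functions from (non-terminal, subject) to results. -/
abbrev Memo (N T : Type) := N → List T → Option (Res N T)

/-- `L[(A,s) ↦ r]`. -/
def Memo.update {N T : Type} [DecidableEq N] [DecidableEq T]
    (L : Memo N T) (A : N) (s : List T) (r : Res N T) : Memo N T :=
  fun B u => if B = A ∧ u = s then some r else L B u

/-- The empty memoization table. -/
def Memo.empty {N T : Type} : Memo N T := fun _ _ => none
mutual
/-- The left-recursive extended semantics `G[p] s L ⇝ r`. -/
inductive LMatch {N T : Type} [DecidableEq N] [DecidableEq T] (G : PEG N T) :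
    PExp N T → List T → Memo N T → Res N T → Prop where
  | empty1 : LMatch G .empty s L (.ok s [])
  | char1 : LMatch G (.term a) (a :: s) L (.ok s [.t a])
  | char2 : b ≠ a → LMatch G (.term b) (a :: s) L .fail
  | char3 : LMatch G (.term a) [] L .fail
  | lvar1 : L A s = none →
      LMatch G (G.prod A) s (Memo.update L A s .fail) (.ok s1 t1) →
      Inc G A s (Memo.update L A s (.ok s1 t1)) (.ok s2 t2) →
      LMatch G (.var A) s L (.ok s2 [.node A t2])
  | lvar2 : L A s = none →
      LMatch G (G.prod A) s (Memo.update L A s .fail) .fail →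
      LMatch G (.var A) s L .fail
  | lvar3 : L A s = some .fail → LMatch G (.var A) s L .fail
  | lvar4 : L A s = some (.ok y t) → LMatch G (.var A) s L (.ok y [.node A t])
  | con1 : LMatch G p1 s L (.ok s1 t1) → LMatch G p2 s1 L (.ok s2 t2) →
      LMatch G (.seq p1 p2) s L (.ok s2 (t1 ++ t2))
  | con2 : LMatch G p1 s L (.ok s1 t1) → LMatch G p2 s1 L .fail →
      LMatch G (.seq p1 p2) s L .fail
  | con3 : LMatch G p1 s L .fail → LMatch G (.seq p1 p2) s L .fail
  | ord1 : LMatch G p1 s L (.ok s1 t1) → LMatch G (.choice p1 p2) s L (.ok s1 t1)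
  | ord2 : LMatch G p1 s L .fail → LMatch G p2 s L .fail →
      LMatch G (.choice p1 p2) s L .fail
  | ord3 : LMatch G p1 s L .fail → LMatch G p2 s L (.ok s1 t1) →
      LMatch G (.choice p1 p2) s L (.ok s1 t1)
  | not1 : LMatch G p s L .fail → LMatch G (.nott p) s L (.ok s [])
  | not2 : LMatch G p s L (.ok s1 t1) → LMatch G (.nott p) s L .fail
  | rep1 : LMatch G p s L .fail → LMatch G (.star p) s L (.ok s [])
  | rep2 : LMatch G p s L (.ok s1 t1) → LMatch G (.star p) s1 L (.ok s2 t2) →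
      LMatch G (.star p) s L (.ok s2 (t1 ++ t2))

/-- The auxiliary bound-increasing relation `G[P(A)] s L ⇝INC r`. -/
inductive Inc {N T : Type} [DecidableEq N] [DecidableEq T] (G : PEG N T) :
    N → List T → Memo N T → Res N T → Prop where
  | inc1 : y ≠ [] →
      LMatch G (G.prod A) (x ++ y ++ z ++ w)
        (Memo.update L A (x ++ y ++ z ++ w) (.ok (y ++ z ++ w) t1)) (.ok (z ++ w) t2) →
      Inc G A (x ++ y ++ z ++ w)
        (Memo.update L A (x ++ y ++ z ++ w) (.ok (z ++ w) t2)) (.ok w t3) →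
      Inc G A (x ++ y ++ z ++ w)
        (Memo.update L A (x ++ y ++ z ++ w) (.ok (y ++ z ++ w) t1)) (.ok w t3)
  | inc2 : L A s = some r → LMatch G (G.prod A) s L .fail → Inc G A s L r
  | inc3 :
      LMatch G (G.prod A) (x ++ y ++ z)
        (Memo.update L A (x ++ y ++ z) (.ok z t1)) (.ok (y ++ z) t2) →
      Inc G A (x ++ y ++ z)
        (Memo.update L A (x ++ y ++ z) (.ok z t1)) (.ok z t1)
end

/-- Derivations (proof trees) of the original PEG semantics `G[p] s ⇝ r`. -/
inductive MatchD {N T : Type} (G : PEG N T) : PExp N T → List T → Res N T → Type where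
  | empty1 : MatchD G .empty s (.ok s [])
  | char1 : MatchD G (.term a) (a :: s) (.ok s [.t a])
  | char2 : b ≠ a → MatchD G (.term b) (a :: s) .fail
  | char3 : MatchD G (.term a) [] .fail
  | var1 : MatchD G (G.prod A) s (.ok s1 t) → MatchD G (.var A) s (.ok s1 [.node A t])
  | var2 : MatchD G (G.prod A) s .fail → MatchD G (.var A) s .fail
  | con1 : MatchD G p1 s (.ok s1 t1) → MatchD G p2 s1 (.ok s2 t2) →
      MatchD G (.seq p1 p2) s (.ok s2 (t1 ++ t2))
  | con2 : MatchD G p1 s (.ok s1 t1) → MatchD G p2 s1 .fail → MatchD G (.seq p1 p2) s .fail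
  | con3 : MatchD G p1 s .fail → MatchD G (.seq p1 p2) s .fail
  | ord1 : MatchD G p1 s (.ok s1 t1) → MatchD G (.choice p1 p2) s (.ok s1 t1)
  | ord2 : MatchD G p1 s .fail → MatchD G p2 s .fail → MatchD G (.choice p1 p2) s .fail
  | ord3 : MatchD G p1 s .fail → MatchD G p2 s (.ok s1 t1) → MatchD G (.choice p1 p2) s (.ok s1 t1)
  | not1 : MatchD G p s .fail → MatchD G (.nott p) s (.ok s [])
  | not2 : MatchD G p s (.ok s1 t1) → MatchD G (.nott p) s .fail
  | rep1 : MatchD G p s .fail → MatchD G (.star p) s (.ok s [])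
  | rep2 : MatchD G p s (.ok s1 t1) → MatchD G (.star p) s1 (.ok s2 t2) →
      MatchD G (.star p) s (.ok s2 (t1 ++ t2))

/-- `d.uses A w` holds iff `G[A] w` appears on the left-hand side of some node
of the proof tree `d`. -/
def MatchD.uses {N T : Type} {G : PEG N T} :
    ∀ {p : PExp N T} {s : List T} {r : Res N T}, MatchD G p s r → N → List T → Prop
  | _, _, _, .empty1, _, _ => False
  | _, _, _, .char1, _, _ => False
  | _, _, _, .char2 _, _, _ => False
  | _, _, _, .char3, _, _ => False
  | _, s, _, .var1 (A := A) d, B, w => (B = A ∧ w = s) ∨ d.uses B w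
  | _, s, _, .var2 (A := A) d, B, w => (B = A ∧ w = s) ∨ d.uses B w
  | _, _, _, .con1 d1 d2, B, w => d1.uses B w ∨ d2.uses B w
  | _, _, _, .con2 d1 d2, B, w => d1.uses B w ∨ d2.uses B w
  | _, _, _, .con3 d1, B, w => d1.uses B w
  | _, _, _, .ord1 d1, B, w => d1.uses B w
  | _, _, _, .ord2 d1 d2, B, w => d1.uses B w ∨ d2.uses B w
  | _, _, _, .ord3 d1 d2, B, w => d1.uses B w ∨ d2.uses B w
  | _, _, _, .not1 d1, B, w => d1.uses B w
  | _, _, _, .not2 d1, B, w => d1.uses B w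
  | _, _, _, .rep1 d1, B, w => d1.uses B w
  | _, _, _, .rep2 d1 d2, B, w => d1.uses B w ∨ d2.uses B w

def MatchD.size {N T : Type} {G : PEG N T} :
    ∀ {p : PExp N T} {s : List T} {r : Res N T}, MatchD G p s r → ℕ
  | _, _, _, .empty1 => 1
  | _, _, _, .char1 => 1
  | _, _, _, .char2 _ => 1
  | _, _, _, .char3 => 1
  | _, _, _, .var1 d => d.size + 1
  | _, _, _, .var2 d => d.size + 1
  | _, _, _, .con1 d1 d2 => d1.size + d2.size + 1
  | _, _, _, .con2 d1 d2 => d1.size + d2.size + 1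
  | _, _, _, .con3 d1 => d1.size + 1
  | _, _, _, .ord1 d1 => d1.size + 1
  | _, _, _, .ord2 d1 d2 => d1.size + d2.size + 1
  | _, _, _, .ord3 d1 d2 => d1.size + d2.size + 1
  | _, _, _, .not1 d1 => d1.size + 1
  | _, _, _, .not2 d1 => d1.size + 1
  | _, _, _, .rep1 d1 => d1.size + 1
  | _, _, _, .rep2 d1 d2 => d1.size + d2.size + 1

theorem matchD_det {N T : Type} {G : PEG N T} {p : PExp N T} {s : List T}
    {r1 r2 : Res N T} (d1 : MatchD G p s r1) (d2 : MatchD G p s r2) : r1 = r2 := by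
  induction d1 generalizing r2 with
  | empty1 => cases d2; rfl
  | char1 =>
    cases d2 with
    | char1 => rfl
    | char2 h => exact absurd rfl h
  | char2 h =>
    cases d2 with
    | char1 => exact absurd rfl h
    | char2 _ => rfl
  | char3 => cases d2; rfl
  | var1 d ih =>
    cases d2 with
    | var1 d2 => cases ih d2; rfl
    | var2 d2 => cases ih d2
  | var2 d ih =>
    cases d2 with
    | var1 d2 => cases ih d2
    | var2 _ => rfl
  | con1 a b iha ihb =>
    cases d2 with
    | con1 a2 b2 => cases iha a2; cases ihb b2; rfl
    | con2 a2 b2 => cases iha a2; cases ihb b2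
    | con3 a2 => cases iha a2
  | con2 a b iha ihb =>
    cases d2 with
    | con1 a2 b2 => cases iha a2; cases ihb b2
    | con2 a2 b2 => rfl
    | con3 a2 => cases iha a2
  | con3 a iha =>
    cases d2 with
    | con1 a2 b2 => cases iha a2
    | con2 a2 b2 => cases iha a2
    | con3 a2 => rfl
  | ord1 a iha =>
    cases d2 with
    | ord1 a2 => exact iha a2
    | ord2 a2 b2 => cases iha a2
    | ord3 a2 b2 => cases iha a2
  | ord2 a b iha ihb =>
    cases d2 with
    | ord1 a2 => cases iha a2
    | ord2 a2 b2 => rfl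
    | ord3 a2 b2 => cases ihb b2
  | ord3 a b iha ihb =>
    cases d2 with
    | ord1 a2 => cases iha a2
    | ord2 a2 b2 => cases ihb b2
    | ord3 a2 b2 => exact ihb b2
  | not1 a iha =>
    cases d2 with
    | not1 a2 => rfl
    | not2 a2 => cases iha a2
  | not2 a iha =>
    cases d2 with
    | not1 a2 => cases iha a2
    | not2 a2 => rfl
  | rep1 a iha =>
    cases d2 with
    | rep1 a2 => rfl
    | rep2 a2 b2 => cases iha a2
  | rep2 a b iha ihb =>
    cases d2 with
    | rep1 a2 => cases iha a2
    | rep2 a2 b2 => cases iha a2; cases ihb b2; rfl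
theorem MatchD.uses_sub {N T : Type} {G : PEG N T} :
    ∀ {p : PExp N T} {s : List T} {r : Res N T} (d : MatchD G p s r) (A : N) (w : List T),
    d.uses A w → ∃ r', ∃ d' : MatchD G (G.prod A) w r',
      d'.size < d.size ∧ ∀ B u, d'.uses B u → d.uses B u := by
  intro p s r d
  induction d with
  | empty1 => intro A w h; simp only [MatchD.uses] at h
  | char1 => intro A w h; simp only [MatchD.uses] at h
  | char2 _ => intro A w h; simp only [MatchD.uses] at h
  | char3 => intro A w h; simp only [MatchD.uses] at h
  | var1 d ih =>
    intro A w h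
    simp only [MatchD.uses] at h
    rcases h with ⟨rfl, rfl⟩ | h
    · exact ⟨_, d, by simp [MatchD.size], fun C u hu => Or.inr hu⟩
    · obtain ⟨r', d', hlt, hsub⟩ := ih A w h
      exact ⟨r', d', by simp only [MatchD.size]; omega,
        fun C u hu => Or.inr (hsub C u hu)⟩
  | var2 d ih =>
    intro A w h
    simp only [MatchD.uses] at h
    rcases h with ⟨rfl, rfl⟩ | h
    · exact ⟨_, d, by simp [MatchD.size], fun C u hu => Or.inr hu⟩
    · obtain ⟨r', d', hlt, hsub⟩ := ih A w h
      exact ⟨r', d', by simp only [MatchD.size]; omega,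
        fun C u hu => Or.inr (hsub C u hu)⟩
  | con1 a b iha ihb =>
    intro A w h
    simp only [MatchD.uses] at h
    rcases h with h | h
    · obtain ⟨r', d', hlt, hsub⟩ := iha A w h
      exact ⟨r', d', by simp only [MatchD.size]; omega,
        fun C u hu => Or.inl (hsub C u hu)⟩
    · obtain ⟨r', d', hlt, hsub⟩ := ihb A w h
      exact ⟨r', d', by simp only [MatchD.size]; omega,
        fun C u hu => Or.inr (hsub C u hu)⟩
  | con2 a b iha ihb =>
    intro A w h
    simp only [MatchD.uses] at h
    rcases h with h | h
    · obtain ⟨r', d', hlt, hsub⟩ := iha A w h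
      exact ⟨r', d', by simp only [MatchD.size]; omega,
        fun C u hu => Or.inl (hsub C u hu)⟩
    · obtain ⟨r', d', hlt, hsub⟩ := ihb A w h
      exact ⟨r', d', by simp only [MatchD.size]; omega,
        fun C u hu => Or.inr (hsub C u hu)⟩
  | con3 a iha =>
    intro A w h
    obtain ⟨r', d', hlt, hsub⟩ := iha A w h
    exact ⟨r', d', by simp only [MatchD.size]; omega, hsub⟩
  | ord1 a iha =>
    intro A w h
    obtain ⟨r', d', hlt, hsub⟩ := iha A w h
    exact ⟨r', d', by simp only [MatchD.size]; omega, hsub⟩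
  | ord2 a b iha ihb =>
    intro A w h
    simp only [MatchD.uses] at h
    rcases h with h | h
    · obtain ⟨r', d', hlt, hsub⟩ := iha A w h
      exact ⟨r', d', by simp only [MatchD.size]; omega,
        fun C u hu => Or.inl (hsub C u hu)⟩
    · obtain ⟨r', d', hlt, hsub⟩ := ihb A w h
      exact ⟨r', d', by simp only [MatchD.size]; omega,
        fun C u hu => Or.inr (hsub C u hu)⟩
  | ord3 a b iha ihb =>
    intro A w h
    simp only [MatchD.uses] at h
    rcases h with h | h
    · obtain ⟨r', d', hlt, hsub⟩ := iha A w h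
      exact ⟨r', d', by simp only [MatchD.size]; omega,
        fun C u hu => Or.inl (hsub C u hu)⟩
    · obtain ⟨r', d', hlt, hsub⟩ := ihb A w h
      exact ⟨r', d', by simp only [MatchD.size]; omega,
        fun C u hu => Or.inr (hsub C u hu)⟩
  | not1 a iha =>
    intro A w h
    obtain ⟨r', d', hlt, hsub⟩ := iha A w h
    exact ⟨r', d', by simp only [MatchD.size]; omega, hsub⟩
  | not2 a iha =>
    intro A w h
    obtain ⟨r', d', hlt, hsub⟩ := iha A w h
    exact ⟨r', d', by simp only [MatchD.size]; omega, hsub⟩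
  | rep1 a iha =>
    intro A w h
    obtain ⟨r', d', hlt, hsub⟩ := iha A w h
    exact ⟨r', d', by simp only [MatchD.size]; omega, hsub⟩
  | rep2 a b iha ihb =>
    intro A w h
    simp only [MatchD.uses] at h
    rcases h with h | h
    · obtain ⟨r', d', hlt, hsub⟩ := iha A w h
      exact ⟨r', d', by simp only [MatchD.size]; omega,
        fun C u hu => Or.inl (hsub C u hu)⟩
    · obtain ⟨r', d', hlt, hsub⟩ := ihb A w h
      exact ⟨r', d', by simp only [MatchD.size]; omega,
        fun C u hu => Or.inr (hsub C u hu)⟩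

theorem matchD_suffix {N T : Type} {G : PEG N T} :
    ∀ {p : PExp N T} {s : List T} {r : Res N T}, MatchD G p s r →
    ∀ s1 t, r = .ok s1 t → ∃ pre, s = pre ++ s1 := by
  intro p s r d
  induction d with
  | empty1 => intro s1 t h; cases h; exact ⟨[], rfl⟩
  | char1 => intro s1 t h; cases h; exact ⟨[_], rfl⟩
  | char2 _ => intro s1 t h; cases h
  | char3 => intro s1 t h; cases h
  | var1 d ih => intro s1 t h; cases h; exact ih _ _ rfl
  | var2 d ih => intro s1 t h; cases h
  | con1 a b iha ihb =>
    intro s1 t h; cases h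
    obtain ⟨p1, rfl⟩ := iha _ _ rfl
    obtain ⟨p2, rfl⟩ := ihb _ _ rfl
    exact ⟨p1 ++ p2, by simp⟩
  | con2 a b iha ihb => intro s1 t h; cases h
  | con3 a iha => intro s1 t h; cases h
  | ord1 a iha => intro s1 t h; cases h; exact iha _ _ rfl
  | ord2 a b iha ihb => intro s1 t h; cases h
  | ord3 a b iha ihb => intro s1 t h; cases h; exact ihb _ _ rfl
  | not1 a iha => intro s1 t h; cases h; exact ⟨[], rfl⟩
  | not2 a iha => intro s1 t h; cases h
  | rep1 a iha => intro s1 t h; cases h; exact ⟨[], rfl⟩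
  | rep2 a b iha ihb =>
    intro s1 t h; cases h
    obtain ⟨p1, rfl⟩ := iha _ _ rfl
    obtain ⟨p2, rfl⟩ := ihb _ _ rfl
    exact ⟨p1 ++ p2, by simp⟩

theorem exists_nouse {N T : Type} {G : PEG N T} (A : N) :
    ∀ (n : ℕ) {s : List T} {r : Res N T} (d : MatchD G (G.prod A) s r), d.size ≤ n →
    ∃ d0 : MatchD G (G.prod A) s r, d0.size ≤ d.size ∧ ¬ d0.uses A s ∧
      ∀ B u, d0.uses B u → d.uses B u := by
  intro n
  induction n with
  | zero =>
    intro s r d h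
    by_cases hu : d.uses A s
    · obtain ⟨r', d', hlt, _⟩ := MatchD.uses_sub d A s hu
      omega
    · exact ⟨d, le_refl _, hu, fun _ _ h => h⟩
  | succ n ih =>
    intro s r d h
    by_cases hu : d.uses A s
    · obtain ⟨r', d', hlt, hsub⟩ := MatchD.uses_sub d A s hu
      cases matchD_det d' d
      obtain ⟨d0, h1, h2, h3⟩ := ih d' (by omega)
      exact ⟨d0, by omega, h2, fun B u hu' => hsub B u (h3 B u hu')⟩
    · exact ⟨d, le_refl _, hu, fun _ _ h => h⟩
theorem lmatch_conservative_aux {N T : Type} [DecidableEq N] [DecidableEq T]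
    (G : PEG N T) : ∀ (n : ℕ) {p : PExp N T} {s : List T} {X : Res N T}
    (d : MatchD G p s X), d.size ≤ n →
    ∀ L : Memo N T, (∀ (A : N) (w : List T), d.uses A w → L A w = none) →
    LMatch G p s L X := by
  intro n
  induction n with
  | zero =>
    intro p s X d h
    cases d <;> simp [MatchD.size] at h
  | succ n ih =>
    intro p s X d h L hL
    cases d with
    | empty1 => exact .empty1
    | char1 => exact .char1
    | char2 hne => exact .char2 hne
    | char3 => exact .char3
    | con1 a b =>
      simp only [MatchD.size] at h
      exact .con1 (ih a (by omega) L (fun A w hu => hL A w (Or.inl hu)))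
        (ih b (by omega) L (fun A w hu => hL A w (Or.inr hu)))
    | con2 a b =>
      simp only [MatchD.size] at h
      exact .con2 (ih a (by omega) L (fun A w hu => hL A w (Or.inl hu)))
        (ih b (by omega) L (fun A w hu => hL A w (Or.inr hu)))
    | con3 a =>
      simp only [MatchD.size] at h
      exact .con3 (ih a (by omega) L hL)
    | ord1 a =>
      simp only [MatchD.size] at h
      exact .ord1 (ih a (by omega) L hL)
    | ord2 a b =>
      simp only [MatchD.size] at h
      exact .ord2 (ih a (by omega) L (fun A w hu => hL A w (Or.inl hu)))
        (ih b (by omega) L (fun A w hu => hL A w (Or.inr hu)))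
    | ord3 a b =>
      simp only [MatchD.size] at h
      exact .ord3 (ih a (by omega) L (fun A w hu => hL A w (Or.inl hu)))
        (ih b (by omega) L (fun A w hu => hL A w (Or.inr hu)))
    | not1 a =>
      simp only [MatchD.size] at h
      exact .not1 (ih a (by omega) L hL)
    | not2 a =>
      simp only [MatchD.size] at h
      exact .not2 (ih a (by omega) L hL)
    | rep1 a =>
      simp only [MatchD.size] at h
      exact .rep1 (ih a (by omega) L hL)
    | rep2 a b =>
      simp only [MatchD.size] at h
      exact .rep2 (ih a (by omega) L (fun A w hu => hL A w (Or.inl hu)))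
        (ih b (by omega) L (fun A w hu => hL A w (Or.inr hu)))
    | @var1 A s s1 t d' =>
      simp only [MatchD.size] at h
      have h0 : L A s = none := hL A s (Or.inl ⟨rfl, rfl⟩)
      obtain ⟨d0, hsize, hnouse, hsub⟩ := exists_nouse A d'.size d' (le_refl _)
      have hL0 : ∀ (r0 : Res N T) (B : N) (w : List T), d0.uses B w →
          Memo.update L A s r0 B w = none := by
        intro r0 B w hu
        have hne : ¬ (B = A ∧ w = s) := by
          rintro ⟨rfl, rfl⟩; exact hnouse hu
        simp only [Memo.update, if_neg hne]
        exact hL B w (Or.inr (hsub B w hu))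
      have h1 : LMatch G (G.prod A) s (Memo.update L A s .fail) (.ok s1 t) :=
        ih d0 (by omega) _ (hL0 .fail)
      have h2 : LMatch G (G.prod A) s (Memo.update L A s (.ok s1 t)) (.ok s1 t) :=
        ih d0 (by omega) _ (hL0 (.ok s1 t))
      obtain ⟨pre, hs⟩ := matchD_suffix d' s1 t rfl
      have he : pre ++ ([] : List T) ++ s1 = s := by simp [hs]
      have hinc : Inc G A (pre ++ [] ++ s1)
          (Memo.update L A (pre ++ [] ++ s1) (.ok s1 t)) (.ok s1 t) := by
        refine Inc.inc3 (x := pre) (y := []) (z := s1) (t1 := t) (t2 := t) ?_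
        rw [he]
        exact h2
      rw [he] at hinc
      exact .lvar1 h0 h1 hinc
    | @var2 A s d' =>
      simp only [MatchD.size] at h
      have h0 : L A s = none := hL A s (Or.inl ⟨rfl, rfl⟩)
      obtain ⟨d0, hsize, hnouse, hsub⟩ := exists_nouse A d'.size d' (le_refl _)
      have h1 : LMatch G (G.prod A) s (Memo.update L A s .fail) .fail := by
        refine ih d0 (by omega) _ ?_
        intro B w hu
        have hne : ¬ (B = A ∧ w = s) := by
          rintro ⟨rfl, rfl⟩; exact hnouse hu
        simp only [Memo.update, if_neg hne]
        exact hL B w (Or.inr (hsub B w hu))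
      exact .lvar2 h0 h1
/-- Conservativeness: if `G[p] s ⇝ X` in the original semantics (witnessed by
the proof tree `d`), then `G[p] s L ⇝ X` in the left-recursive extended
semantics, for any memoization table `L` containing no entry `(A, w)` for any
`G[A] w` appearing in `d`. -/
theorem lmatch_conservative {N T : Type} [DecidableEq N] [DecidableEq T]
    (G : PEG N T) (p : PExp N T) (s : List T) (X : Res N T)
    (d : MatchD G p s X) (L : Memo N T)
    (hL : ∀ (A : N) (w : List T), d.uses A w → L A w = none) :
    LMatch G p s L X := by
  exact lmatch_conservative_aux G d.size d (le_refl _) L hL
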